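/- In a partially ordered abelian semigroup with order-reversing involution as above, inserting e* truncates the continued fraction: [x_1,…,x_m, e*, x_{m+1},…,x_n] = [x_1,…,x_m]; and inserting e merges adjacent terms: [x_1,…,x_m, e, x_{m+1},…,x_n] = [x_1,…,x_m + x_{m+1},…,x_n] for 0 < m < n. -/

import Mathlib

/-- The continued fraction `[x₁,…,xₙ]` on a semigroup with involution `s`:
`[x] = s x` and `[x₁,…,x_{n+1}] = s (x₁ + [x₂,…,x_{n+1}])`. -/
def cf {K : Type*} [AddCommMonoid K] (s : K → K) : List K → K
  | [] => s 0
  | [x] => s x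
  | x :: y :: l => s (x + cf s (y :: l))

private lemma cf_cons {K : Type*} [AddCommMonoid K] (s : K → K) (a : K) (l : List K)
    (h : l ≠ []) : cf s (a :: l) = s (a + cf s l) := by
  cases l with
  | nil => exact absurd rfl h
  | cons b t => rfl

private lemma cf_congr_append {K : Type*} [AddCommMonoid K] (s : K → K) (l₁ l l' : List K)
    (hl : l ≠ []) (hl' : l' ≠ []) (h : cf s l = cf s l') :
    cf s (l₁ ++ l) = cf s (l₁ ++ l') := by
  induction l₁ with
  | nil => simpa using h
  | cons a t ih =>
    rw [List.cons_append, List.cons_append,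
      cf_cons s a (t ++ l) (by simp [hl]), cf_cons s a (t ++ l') (by simp [hl']), ih]

/-- Inserting `e* = s 0` truncates a continued fraction:
`[x₁,…,x_m, e*, x_{m+1},…,xₙ] = [x₁,…,x_m]` for `m ≥ 1`; and inserting the neutral element
`e = 0` merges adjacent terms:
`[x₁,…,x_m, e, x_{m+1},…,xₙ] = [x₁,…,x_m + x_{m+1},…,xₙ]` for `0 < m < n`. -/
theorem cf_insert_neutral {K : Type*} [AddCommMonoid K] [PartialOrder K] (s : K → K)
    (hbot : ∀ x : K, 0 ≤ x)
    (hadd : ∀ a b c : K, a ≤ b → a + c ≤ b + c)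
    (hanti : ∀ a b : K, a ≤ b → s b ≤ s a)
    (hinv : ∀ a : K, s (s a) = a)
    (habs : ∀ a : K, s 0 + a = s 0) :
    (∀ (l₁ l₂ : List K), l₁ ≠ [] → cf s (l₁ ++ s 0 :: l₂) = cf s l₁) ∧
    (∀ (l₁ l₂ : List K) (x y : K),
      cf s (l₁ ++ x :: (0 : K) :: y :: l₂) = cf s (l₁ ++ (x + y) :: l₂)) := by
  -- [s 0, …] = s (s 0) = 0
  have key0 : ∀ l₂ : List K, cf s (s 0 :: l₂) = 0 := by
    intro l₂
    cases l₂ with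
    | nil => exact hinv 0
    | cons y t => rw [cf_cons s _ _ (by simp), habs]; simpa using hinv 0
  -- [x, s 0, …] = s x = [x]
  have key1 : ∀ (x : K) (l₂ : List K), cf s (x :: s 0 :: l₂) = cf s [x] := by
    intro x l₂
    rw [cf_cons s x _ (by simp), key0, add_zero]; rfl
  -- [x, 0, y, …] = [x + y, …]
  have key2 : ∀ (x y : K) (l₂ : List K),
      cf s (x :: (0 : K) :: y :: l₂) = cf s ((x + y) :: l₂) := by
    intro x y l₂
    have h0 : cf s ((0 : K) :: y :: l₂) = s (cf s (y :: l₂)) := by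
      rw [cf_cons s 0 _ (by simp), zero_add]
    cases l₂ with
    | nil =>
      rw [cf_cons s x _ (by simp), h0]
      show s (x + s (s y)) = s (x + y)
      rw [hinv]
    | cons z t =>
      rw [cf_cons s x _ (by simp), h0, cf_cons s y (z :: t) (by simp), hinv,
        cf_cons s (x + y) (z :: t) (by simp), add_assoc]
  constructor
  · intro l₁ l₂ h
    obtain ⟨a, t, rfl⟩ := List.exists_cons_of_ne_nil h
    clear h
    induction t generalizing a with
    | nil => simpa using key1 a l₂
    | cons b u ih =>
      rw [List.cons_append, cf_cons s a ((b :: u) ++ s 0 :: l₂) (by simp), ih b,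
        cf_cons s a (b :: u) (by simp)]
  · intro l₁ l₂ x y
    exact cf_congr_append s l₁ _ _ (by simp) (by simp) (key2 x y l₂)
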